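/- Let (C, C₋, C₊) be a Reedy category and ([n], X) an object of ∫N^{-,+}(C). Then the following are equivalent: (1) X is identity-reflecting, i.e. ([n], X) is an object of ∫N^{--,+}_+(C); (2) the identity morphism of ([n], X) is a maximal element of the hom-poset Hom(([n], X), ([n], X)); (3) the identity morphism of ([n], X) is a minimal element of that hom-poset; (4) the identity morphism of ([n], X) is the largest element of its own ∼-equivalence class; (5) the ∼-equivalence class of the identity morphism of ([n], X) is a singleton. -/

import Mathlib

namespace ReedyPaper

open CategoryTheory

universe v₂ u₂ v₁ u₁ v u

variable {C : Type u} [Category.{v} C]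

def IsIdMor {x y : C} (f : x ⟶ y) : Prop := ∃ h : x = y, f = eqToHom h

structure ReedyStruct (C : Type u) [Category.{v} C] where
  neg : MorphismProperty C
  pos : MorphismProperty C
  neg_id : ∀ x : C, neg (𝟙 x)
  pos_id : ∀ x : C, pos (𝟙 x)
  neg_comp : ∀ {x y z : C} (f : x ⟶ y) (g : y ⟶ z), neg f → neg g → neg (f ≫ g)
  pos_comp : ∀ {x y z : C} (f : x ⟶ y) (g : y ⟶ z), pos f → pos g → pos (f ≫ g)
  factor_existsUnique : ∀ {x y : C} (f : x ⟶ y),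
    ∃! t : Σ z : C, (x ⟶ z) × (z ⟶ y), neg t.2.1 ∧ pos t.2.2 ∧ t.2.1 ≫ t.2.2 = f
  wf : WellFounded (fun x y : C =>
    (∃ f : x ⟶ y, pos f ∧ ¬ IsIdMor f) ∨ (∃ f : y ⟶ x, neg f ∧ ¬ IsIdMor f))

structure ChainObj (C : Type u) [Category.{v} C] where
  n : ℕ
  X : Fin (n + 1) ⥤ C

structure ChainHom (P Q : ChainObj C) where
  α : Fin (P.n + 1) →o Fin (Q.n + 1)
  θ : ∀ i : Fin (P.n + 1), P.X.obj i ⟶ Q.X.obj (α i)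
  natural : ∀ {i j : Fin (P.n + 1)} (h : i ≤ j),
    P.X.map (homOfLE h) ≫ θ j = θ i ≫ Q.X.map (homOfLE (α.monotone h))

theorem ChainHom.ext' {P Q : ChainObj C} {f g : ChainHom P Q}
    (hα : f.α = g.α) (hθ : HEq f.θ g.θ) : f = g := by
  cases f; cases g; cases hα; cases hθ; rfl

def ChainHom.id (P : ChainObj C) : ChainHom P P where
  α := OrderHom.id
  θ i := 𝟙 _
  natural {i j} h := by
    show P.X.map (homOfLE h) ≫ 𝟙 (P.X.obj j) = 𝟙 (P.X.obj i) ≫ P.X.map (homOfLE h)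
    simp

def ChainHom.comp {P Q S : ChainObj C} (f : ChainHom P Q) (g : ChainHom Q S) :
    ChainHom P S where
  α := g.α.comp f.α
  θ i := f.θ i ≫ g.θ (f.α i)
  natural {i j} h := by
    show P.X.map (homOfLE h) ≫ f.θ j ≫ g.θ (f.α j) =
      (f.θ i ≫ g.θ (f.α i)) ≫ S.X.map (homOfLE (g.α.monotone (f.α.monotone h)))
    rw [← Category.assoc, f.natural h, Category.assoc, g.natural (f.α.monotone h),
      ← Category.assoc]

instance : Category (ChainObj C) where
  Hom := ChainHom
  id := ChainHom.id
  comp := ChainHom.comp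
  id_comp f := ChainHom.ext' rfl (heq_of_eq (funext fun i => Category.id_comp _))
  comp_id f := ChainHom.ext' rfl (heq_of_eq (funext fun i => Category.comp_id _))
  assoc f g h := ChainHom.ext' rfl (heq_of_eq (funext fun i => Category.assoc _ _ _))

/-- The partial order on the hom-sets of `∫N(C)` (and of `∫N^{-,+}(C)`):
`(α, θ) ≤ (α', θ')` iff `α ≤ α'` pointwise and `θ'ᵢ = Y(α(i) ≤ α'(i)) ∘ θᵢ` for all `i`. -/
def ChainHom.le {P Q : ChainObj C} (f g : ChainHom P Q) : Prop :=
  (∀ i, f.α i ≤ g.α i) ∧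
    ∀ (i : Fin (P.n + 1)) (h : f.α i ≤ g.α i), g.θ i = f.θ i ≫ Q.X.map (homOfLE h)

theorem ChainHom.le_comp_right {P Q S : ChainObj C} {f f' : P ⟶ Q} (g : Q ⟶ S)
    (h : ChainHom.le f f') : ChainHom.le (f ≫ g) (f' ≫ g) := by
  refine ⟨fun i => g.α.monotone (h.1 i), fun i hi => ?_⟩
  show f'.θ i ≫ g.θ (f'.α i) = (f.θ i ≫ g.θ (f.α i)) ≫ S.X.map (homOfLE hi)
  rw [h.2 i (h.1 i), Category.assoc, g.natural (h.1 i), ← Category.assoc]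
  rfl

theorem ChainHom.le_comp_left {P Q S : ChainObj C} (f : P ⟶ Q) {g g' : Q ⟶ S}
    (h : ChainHom.le g g') : ChainHom.le (f ≫ g) (f ≫ g') := by
  refine ⟨fun i => h.1 (f.α i), fun i hi => ?_⟩
  show f.θ i ≫ g'.θ (f.α i) = (f.θ i ≫ g.θ (f.α i)) ≫ S.X.map (homOfLE hi)
  rw [h.2 (f.α i) (h.1 (f.α i)), ← Category.assoc]
  rfl

/-- Objects of `∫N^{-,+}(C)`: chains all of whose morphisms lie in `C₋`. -/
structure NegObj (R : ReedyStruct C) where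
  n : ℕ
  X : Fin (n + 1) ⥤ C
  negMap : ∀ {i j : Fin (n + 1)} (h : i ≤ j), R.neg (X.map (homOfLE h))

variable {R : ReedyStruct C}

/-- The underlying object of `∫N(C)`. -/
def NegObj.chain (P : NegObj R) : ChainObj C := ⟨P.n, P.X⟩

/-- Morphisms of `∫N^{-,+}(C)`: morphisms of `∫N(C)` all of whose components lie in `C₊`. -/
def NegHomT (P Q : NegObj R) : Type v :=
  { f : P.chain ⟶ Q.chain // ∀ i, R.pos (f.θ i) }

def NegHomT.id (P : NegObj R) : NegHomT P P := ⟨𝟙 P.chain, fun _ => R.pos_id _⟩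

def NegHomT.comp {P Q S : NegObj R} (f : NegHomT P Q) (g : NegHomT Q S) : NegHomT P S :=
  ⟨f.1 ≫ g.1, fun i => by
    show R.pos (f.1.θ i ≫ g.1.θ (f.1.α i))
    exact R.pos_comp _ _ (f.2 i) (g.2 _)⟩

theorem NegHomT.id_comp {P Q : NegObj R} (f : NegHomT P Q) : (NegHomT.id P).comp f = f := by
  apply Subtype.ext
  show 𝟙 P.chain ≫ f.1 = f.1
  exact Category.id_comp f.1

theorem NegHomT.comp_id {P Q : NegObj R} (f : NegHomT P Q) : f.comp (NegHomT.id Q) = f := by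
  apply Subtype.ext
  show f.1 ≫ 𝟙 Q.chain = f.1
  exact Category.comp_id f.1

theorem NegHomT.comp_assoc {P Q S T : NegObj R} (f : NegHomT P Q) (g : NegHomT Q S)
    (h : NegHomT S T) : (f.comp g).comp h = f.comp (g.comp h) := by
  apply Subtype.ext
  show (f.1 ≫ g.1) ≫ h.1 = f.1 ≫ (g.1 ≫ h.1)
  exact Category.assoc f.1 g.1 h.1

/-- The category `∫N^{-,+}(C)`. -/
instance : Category (NegObj R) where
  Hom := NegHomT
  id := NegHomT.id
  comp := NegHomT.comp
  id_comp := NegHomT.id_comp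
  comp_id := NegHomT.comp_id
  assoc := NegHomT.comp_assoc

/-- The order on the hom-sets of `∫N^{-,+}(C)`. -/
def NegHom.le {P Q : NegObj R} (f g : P ⟶ Q) : Prop := ChainHom.le f.1 g.1

/-- The equivalence relation `∼` on the hom-sets of `∫N^{-,+}(C)`: the
symmetric-transitive closure of `≤`. -/
def NegHom.equiv {P Q : NegObj R} (f g : P ⟶ Q) : Prop :=
  Relation.EqvGen (fun a b : P ⟶ Q => NegHom.le a b) f g

theorem NegHom.le_comp_right {P Q S : NegObj R} {f f' : P ⟶ Q} (g : Q ⟶ S)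
    (h : NegHom.le f f') : NegHom.le (f ≫ g) (f' ≫ g) :=
  ChainHom.le_comp_right g.1 h

theorem NegHom.le_comp_left {P Q S : NegObj R} (f : P ⟶ Q) {g g' : Q ⟶ S}
    (h : NegHom.le g g') : NegHom.le (f ≫ g) (f ≫ g') :=
  ChainHom.le_comp_left f.1 h

/-- Identity-reflectingness of a chain. -/
def NegObj.IdRefl (P : NegObj R) : Prop :=
  ∀ {i j : Fin (P.n + 1)} (h : i ≤ j), IsIdMor (P.X.map (homOfLE h)) → i = j

/-- Objects of `∫N^{--,+}_+(C)`: identity-reflecting chains in `C₋`. -/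
structure StrictObj (R : ReedyStruct C) where
  toNegObj : NegObj R
  idRefl : toNegObj.IdRefl

/-- Morphisms of `∫N^{--,+}_+(C)`: morphisms of `∫N^{-,+}(C)` with `α` injective. -/
def StrictHomT (P Q : StrictObj R) : Type v :=
  { f : P.toNegObj ⟶ Q.toNegObj // Function.Injective f.1.α }

def StrictHomT.id (P : StrictObj R) : StrictHomT P P :=
  ⟨𝟙 P.toNegObj, fun _ _ h => h⟩

def StrictHomT.comp {P Q S : StrictObj R} (f : StrictHomT P Q) (g : StrictHomT Q S) :
    StrictHomT P S :=
  ⟨f.1 ≫ g.1, fun _ _ h => f.2 (g.2 h)⟩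

/-- The category `∫N^{--,+}_+(C)`. -/
instance : Category (StrictObj R) where
  Hom := StrictHomT
  id := StrictHomT.id
  comp := StrictHomT.comp
  id_comp f := Subtype.ext (Category.id_comp f.1)
  comp_id f := Subtype.ext (Category.comp_id f.1)
  assoc f g h := Subtype.ext (Category.assoc f.1 g.1 h.1)

/-- The order on the hom-sets of `∫N^{--,+}_+(C)`. -/
def StrictHom.le {P Q : StrictObj R} (f g : P ⟶ Q) : Prop := NegHom.le f.1 g.1

/-- The equivalence relation `∼` on the hom-sets of `∫N^{--,+}_+(C)`. -/
def StrictHom.equiv {P Q : StrictObj R} (f g : P ⟶ Q) : Prop :=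
  Relation.EqvGen (fun a b : P ⟶ Q => StrictHom.le a b) f g

theorem StrictHom.le_comp_right {P Q S : StrictObj R} {f f' : P ⟶ Q} (g : Q ⟶ S)
    (h : StrictHom.le f f') : StrictHom.le (f ≫ g) (f' ≫ g) :=
  NegHom.le_comp_right g.1 h

theorem StrictHom.le_comp_left {P Q S : StrictObj R} (f : P ⟶ Q) {g g' : Q ⟶ S}
    (h : StrictHom.le g g') : StrictHom.le (f ≫ g) (f ≫ g') :=
  NegHom.le_comp_left f.1 h

/-- Objects of `Down_*(C)`: the same as those of `∫N^{-,+}(C)`. -/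
structure DownStar (R : ReedyStruct C) where
  obj : NegObj R

/-- The category `Down_*(C)`: hom-sets are the quotients of those of `∫N^{-,+}(C)`
by the symmetric-transitive closure of `≤`. -/
instance : Category (DownStar R) where
  Hom P Q := Quot (fun f g : P.obj ⟶ Q.obj => NegHom.le f g)
  id P := Quot.mk _ (𝟙 P.obj)
  comp {P Q S} f g :=
    Quot.lift
      (fun f' => Quot.lift (fun g' => Quot.mk _ (f' ≫ g'))
        (fun _ _ hg => Quot.sound (NegHom.le_comp_left f' hg)) g)
      (fun f₁ f₂ hf => Quot.inductionOn g (fun g' =>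
        Quot.sound (NegHom.le_comp_right g' hf))) f
  id_comp f := Quot.inductionOn f fun f' => congrArg (Quot.mk _) (Category.id_comp f')
  comp_id f := Quot.inductionOn f fun f' => congrArg (Quot.mk _) (Category.comp_id f')
  assoc f g h :=
    Quot.inductionOn f fun f' => Quot.inductionOn g fun g' => Quot.inductionOn h fun h' =>
      congrArg (Quot.mk _) (Category.assoc f' g' h')

/-- Objects of `Down(C)`: the same as those of `∫N^{--,+}_+(C)`. -/
structure Down (R : ReedyStruct C) where
  obj : StrictObj R

/-- The category `Down(C)`: hom-sets are the quotients of those of `∫N^{--,+}_+(C)`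
by the symmetric-transitive closure of `≤`. -/
instance : Category (Down R) where
  Hom P Q := Quot (fun f g : P.obj ⟶ Q.obj => StrictHom.le f g)
  id P := Quot.mk _ (𝟙 P.obj)
  comp {P Q S} f g :=
    Quot.lift
      (fun f' => Quot.lift (fun g' => Quot.mk _ (f' ≫ g'))
        (fun _ _ hg => Quot.sound (StrictHom.le_comp_left f' hg)) g)
      (fun f₁ f₂ hf => Quot.inductionOn g (fun g' =>
        Quot.sound (StrictHom.le_comp_right g' hf))) f
  id_comp f := Quot.inductionOn f fun f' => congrArg (Quot.mk _) (Category.id_comp f')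
  comp_id f := Quot.inductionOn f fun f' => congrArg (Quot.mk _) (Category.comp_id f')
  assoc f g h :=
    Quot.inductionOn f fun f' => Quot.inductionOn g fun g' => Quot.inductionOn h fun h' =>
      congrArg (Quot.mk _) (Category.assoc f' g' h')

/-- The quotient functor `∫N^{-,+}(C) → Down_*(C)`. -/
def qStar (R : ReedyStruct C) : NegObj R ⥤ DownStar R where
  obj P := ⟨P⟩
  map f := Quot.mk _ f
  map_id _ := rfl
  map_comp _ _ := rfl

/-- The inclusion functor `Down(C) → Down_*(C)`. -/
def downInclusion (R : ReedyStruct C) : Down R ⥤ DownStar R where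
  obj P := ⟨P.obj.toNegObj⟩
  map {P Q} f :=
    Quot.lift (fun f' : P.obj ⟶ Q.obj => Quot.mk _ f'.1) (fun _ _ h => Quot.sound h) f
  map_id _ := rfl
  map_comp {P Q S} f g := by
    induction f using Quot.ind
    induction g using Quot.ind
    rfl

/-- The last-component functor `∫N(C) → C`. -/
def lastChain : ChainObj C ⥤ C where
  obj P := P.X.obj (Fin.last P.n)
  map {P Q} f := f.θ (Fin.last P.n) ≫ Q.X.map (homOfLE (Fin.le_last (f.α (Fin.last P.n))))
  map_id P := by
    show 𝟙 (P.X.obj (Fin.last P.n)) ≫ P.X.map (homOfLE (Fin.le_last (Fin.last P.n))) = 𝟙 _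
    rw [Category.id_comp]
    exact P.X.map_id _
  map_comp {P Q S} f g := by
    show (f.θ (Fin.last P.n) ≫ g.θ (f.α (Fin.last P.n))) ≫
        S.X.map (homOfLE (Fin.le_last (g.α (f.α (Fin.last P.n))))) =
      (f.θ (Fin.last P.n) ≫ Q.X.map (homOfLE (Fin.le_last (f.α (Fin.last P.n))))) ≫
        g.θ (Fin.last Q.n) ≫ S.X.map (homOfLE (Fin.le_last (g.α (Fin.last Q.n))))
    rw [Category.assoc, Category.assoc, ← Category.assoc (Q.X.map _),
      g.natural (Fin.le_last (f.α (Fin.last P.n))), Category.assoc, ← Functor.map_comp,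
      homOfLE_comp]

theorem lastChain_eq_of_le {P Q : ChainObj C} {f g : P ⟶ Q} (h : ChainHom.le f g) :
    lastChain.map f = lastChain.map g := by
  show f.θ (Fin.last P.n) ≫ Q.X.map (homOfLE (Fin.le_last (f.α (Fin.last P.n)))) =
    g.θ (Fin.last P.n) ≫ Q.X.map (homOfLE (Fin.le_last (g.α (Fin.last P.n))))
  rw [h.2 (Fin.last P.n) (h.1 (Fin.last P.n)), Category.assoc, ← Functor.map_comp,
    homOfLE_comp]

/-- The forgetful functor `∫N^{-,+}(C) → ∫N(C)`. -/
def negForget (R : ReedyStruct C) : NegObj R ⥤ ChainObj C where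
  obj P := P.chain
  map f := f.1
  map_id _ := rfl
  map_comp _ _ := rfl

/-- The last-component functor `∫N^{-,+}(C) → C`. -/
def lastNeg (R : ReedyStruct C) : NegObj R ⥤ C := negForget R ⋙ lastChain

/-- The forgetful functor `∫N^{--,+}_+(C) → ∫N^{-,+}(C)`. -/
def strictForget (R : ReedyStruct C) : StrictObj R ⥤ NegObj R where
  obj P := P.toNegObj
  map f := f.1
  map_id _ := rfl
  map_comp _ _ := rfl

/-- The last-component functor `∫N^{--,+}_+(C) → C`. -/
def lastStrict (R : ReedyStruct C) : StrictObj R ⥤ C := strictForget R ⋙ lastNeg R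

/-- The last-component functor `Down_*(C) → C`. -/
def lastDownStar (R : ReedyStruct C) : DownStar R ⥤ C where
  obj P := (lastNeg R).obj P.obj
  map {P Q} f :=
    Quot.lift (fun f' : P.obj ⟶ Q.obj => (lastNeg R).map f')
      (fun _ _ h => lastChain_eq_of_le h) f
  map_id P := (lastNeg R).map_id P.obj
  map_comp {P Q S} f g := by
    induction f using Quot.ind
    induction g using Quot.ind
    exact (lastNeg R).map_comp _ _

/-- The last-component functor `Down(C) → C`. -/
def lastDown (R : ReedyStruct C) : Down R ⥤ C where
  obj P := (lastStrict R).obj P.obj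
  map {P Q} f :=
    Quot.lift (fun f' : P.obj ⟶ Q.obj => (lastStrict R).map f')
      (fun _ _ h => lastChain_eq_of_le h) f
  map_id P := (lastStrict R).map_id P.obj
  map_comp {P Q S} f g := by
    induction f using Quot.ind
    induction g using Quot.ind
    exact (lastStrict R).map_comp _ _

/-- The wide subcategory `Γ₋` of `∫N^{-,+}(C)`: morphisms of the form
`(σ, id) : ([m], X ∘ σ) → ([n], X)` with `σ` surjective, i.e. morphisms whose simplicial
component is surjective and all of whose components are identities. -/
def GammaNeg (R : ReedyStruct C) {P Q : NegObj R} (f : P ⟶ Q) : Prop :=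
  Function.Surjective f.1.α ∧ ∀ i, IsIdMor (f.1.θ i)

/-- The wide subcategory `Γ₊` of `∫N^{-,+}(C)`: morphisms `(δ, θ)` with `δ` injective. -/
def GammaPos (R : ReedyStruct C) {P Q : NegObj R} (f : P ⟶ Q) : Prop :=
  Function.Injective f.1.α

/-- Whiskering (precomposition) with `lastF` is bijective on natural transformations
between functors out of `C`. -/
def WhiskerUnique {Γ : Type u₁} [Category.{v₁} Γ] (lastF : Γ ⥤ C) : Prop :=
  ∀ {D : Type u₂} [Category.{v₂} D] (F G : C ⥤ D)
    (ε : lastF ⋙ F ⟶ lastF ⋙ G), ∃! ε' : F ⟶ G, Functor.whiskerLeft lastF ε' = ε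

/-- `lastF : Γ ⥤ C` is a weak 1-localization of `Γ` at the `last`-weak equivalences
(the morphisms sent by `lastF` to identities). -/
def IsWeakLocalizationAtLastWeq {Γ : Type u₁} [Category.{v₁} Γ] (lastF : Γ ⥤ C) : Prop :=
  (∀ {P Q : Γ} (f : P ⟶ Q), IsIdMor (lastF.map f) → IsIso (lastF.map f)) ∧
  (∀ {E : Type u₂} [Category.{v₂} E] (G : Γ ⥤ E),
    (∀ {P Q : Γ} (f : P ⟶ Q), IsIdMor (lastF.map f) → IsIso (G.map f)) →
    ∃ H : C ⥤ E, Nonempty (lastF ⋙ H ≅ G)) ∧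
  (∀ {E : Type u₂} [Category.{v₂} E] (H H' : C ⥤ E) (θ : lastF ⋙ H ≅ lastF ⋙ H'),
    ∃! θ' : H ≅ H', Functor.isoWhiskerLeft lastF θ' = θ)


section Aux

variable {R : ReedyStruct C}

theorem wf_irrefl (R : ReedyStruct C) (x : C)
    (h : (∃ f : x ⟶ x, R.pos f ∧ ¬ IsIdMor f) ∨ (∃ f : x ⟶ x, R.neg f ∧ ¬ IsIdMor f)) :
    False :=
  R.wf.asymmetric x x h h

theorem IsIdMor.eq_id {x : C} {f : x ⟶ x} (h : IsIdMor f) : f = 𝟙 x := by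
  obtain ⟨e, he⟩ := h
  exact he

theorem pos_of_isIdMor {x y : C} {f : x ⟶ y} (h : IsIdMor f) : R.pos f := by
  obtain ⟨e, he⟩ := h
  subst e
  rw [he]
  exact R.pos_id x

theorem uniq_fact {x y : C} (f : x ⟶ y) {z w : C} {g1 : x ⟶ z} {h1 : z ⟶ y}
    {g2 : x ⟶ w} {h2 : w ⟶ y}
    (c1 : R.neg g1) (c2 : R.pos h1) (c3 : g1 ≫ h1 = f)
    (d1 : R.neg g2) (d2 : R.pos h2) (d3 : g2 ≫ h2 = f) :
    (⟨z, g1, h1⟩ : Σ v : C, (x ⟶ v) × (v ⟶ y)) = ⟨w, g2, h2⟩ := by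
  obtain ⟨t, _, ht⟩ := R.factor_existsUnique f
  exact (ht ⟨z, g1, h1⟩ ⟨c1, c2, c3⟩).trans (ht ⟨w, g2, h2⟩ ⟨d1, d2, d3⟩).symm

theorem isIdMor_of_neg_pos {x y : C} {f : x ⟶ y} (hn : R.neg f) (hp : R.pos f) :
    IsIdMor f := by
  have H := uniq_fact (R := R) f hn (R.pos_id y) (Category.comp_id f)
    (R.neg_id x) hp (Category.id_comp f)
  have he : y = x := congrArg Sigma.fst H
  subst he
  injection H with h1 h2
  exact ⟨rfl, congrArg Prod.fst h2⟩

theorem isIdMor_of_fact_id {x z : C} {m : x ⟶ z} {p : z ⟶ x} (hm : R.neg m)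
    (hp : R.pos p) (h : m ≫ p = 𝟙 x) : IsIdMor m ∧ IsIdMor p := by
  have H := uniq_fact (R := R) (𝟙 x) hm hp h (R.neg_id x) (R.pos_id x)
    (Category.id_comp (𝟙 x))
  have he : z = x := congrArg Sigma.fst H
  subst he
  injection H with h1 h2
  exact ⟨⟨rfl, congrArg Prod.fst h2⟩, ⟨rfl, congrArg Prod.snd h2⟩⟩

theorem isIdMor_of_neg_splitMono {x y : C} {s : x ⟶ y} (hs : R.neg s) {r : y ⟶ x}
    (hr : s ≫ r = 𝟙 x) : IsIdMor s := by
  obtain ⟨⟨w, n, p⟩, ⟨hn, hp, hc⟩, -⟩ := R.factor_existsUnique r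
  dsimp at hn hp hc
  have h1 : (s ≫ n) ≫ p = 𝟙 x := by
    rw [Category.assoc, hc, hr]
  have hsn0 : IsIdMor (s ≫ n) := (isIdMor_of_fact_id (R.neg_comp _ _ hs hn) hp h1).1
  obtain ⟨e, hsne⟩ := hsn0
  subst e
  have hsn : s ≫ n = 𝟙 x := hsne
  have hq : IsIdMor (n ≫ s) := by
    by_contra hq
    exact wf_irrefl R y (Or.inr ⟨n ≫ s, R.neg_comp _ _ hn hs, hq⟩)
  have hns : n ≫ s = 𝟙 y := hq.eq_id
  by_contra hsid
  have hnid : ¬ IsIdMor n := by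
    rintro ⟨e, he⟩
    subst e
    apply hsid
    have hn1 : n = 𝟙 y := he
    rw [hn1, Category.comp_id] at hsn
    exact ⟨rfl, hsn⟩
  exact R.wf.asymmetric y x (Or.inr ⟨s, hs, hsid⟩) (Or.inr ⟨n, hn, hnid⟩)

theorem map_homOfLE_eq_eqToHom {m : ℕ} (X : Fin (m + 1) ⥤ C) {a b : Fin (m + 1)}
    (h : a ≤ b) (e : a = b) : X.map (homOfLE h) = eqToHom (congrArg X.obj e) := by
  subst e
  rw [show homOfLE h = 𝟙 a from rfl, X.map_id]
  rfl

theorem map_homOfLE_congr {m : ℕ} (X : Fin (m + 1) ⥤ C) {a b a' b' : Fin (m + 1)}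
    (h : a ≤ b) (e1 : a = a') (e2 : b = b') (h' : a' ≤ b') :
    X.map (homOfLE h) =
      eqToHom (congrArg X.obj e1) ≫ X.map (homOfLE h') ≫ eqToHom (congrArg X.obj e2).symm := by
  subst e1; subst e2
  rw [show congrArg X.obj (rfl : a = a) = rfl from rfl,
    show (congrArg X.obj (rfl : b = b)).symm = rfl from rfl, eqToHom_refl, eqToHom_refl,
    Category.id_comp, Category.comp_id]

theorem isIdMor_map_congr {m : ℕ} (X : Fin (m + 1) ⥤ C) {a b b' : Fin (m + 1)}
    (h : a ≤ b) (h' : a ≤ b') (e : b = b')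
    (H : IsIdMor (X.map (homOfLE h))) : IsIdMor (X.map (homOfLE h')) := by
  subst e
  exact H

theorem chainHom_eq_id {P : ChainObj C} (f : ChainHom P P) (hα : ∀ a, f.α a = a)
    (hθ : ∀ a, f.θ a = eqToHom (congrArg P.X.obj (hα a)).symm) : f = ChainHom.id P := by
  obtain ⟨α, θ, nat⟩ := f
  have hα' : α = OrderHom.id := OrderHom.ext _ _ (funext fun a => hα a)
  subst hα'
  refine ChainHom.ext' rfl (heq_of_eq (funext fun a => ?_))
  exact hθ a

theorem negHom_le_refl {P Q : NegObj R} (f : P ⟶ Q) : NegHom.le f f := by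
  refine ⟨fun a => le_refl _, fun a h => ?_⟩
  rw [map_homOfLE_eq_eqToHom Q.chain.X h rfl]
  exact (Category.comp_id _).symm

theorem one_to_two {P : NegObj R} (hRefl : P.IdRefl) (g : P ⟶ P)
    (hle : NegHom.le (𝟙 P) g) : g = 𝟙 P := by
  have key : ∀ a, g.1.θ a = P.chain.X.map (homOfLE (hle.1 a)) := by
    intro a
    exact (hle.2 a (hle.1 a)).trans (Category.id_comp _)
  have hα : ∀ a, g.1.α a = a := by
    intro a
    have hid : IsIdMor (P.X.map (homOfLE (hle.1 a))) :=
      isIdMor_of_neg_pos (P.negMap (hle.1 a)) ((key a) ▸ g.2 a)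
    exact (hRefl (hle.1 a) hid).symm
  apply Subtype.ext
  apply chainHom_eq_id _ hα
  intro a
  rw [key a, map_homOfLE_eq_eqToHom P.chain.X (hle.1 a) (hα a).symm]
  rfl

theorem one_to_three {P : NegObj R} (hRefl : P.IdRefl) (g : P ⟶ P)
    (hle : NegHom.le g (𝟙 P)) : g = 𝟙 P := by
  have hα : ∀ v : ℕ, ∀ a : Fin (P.n + 1), a.val = v → g.1.α a = a := by
    intro v
    induction v using Nat.strong_induction_on with
    | _ v ih =>
      intro a hav
      rcases eq_or_lt_of_le (hle.1 a) with h | hlt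
      · exact h
      · have hval : (g.1.α a).val < v := hav ▸ hlt
        have hj : g.1.α (g.1.α a) = g.1.α a := ih _ hval _ rfl
        have hθj : g.1.θ (g.1.α a) ≫ eqToHom (congrArg P.chain.X.obj hj) = 𝟙 _ := by
          have h2 := (hle.2 (g.1.α a) (hle.1 (g.1.α a))).symm
          rw [map_homOfLE_eq_eqToHom P.chain.X (hle.1 (g.1.α a)) hj] at h2
          exact h2
        have hnat := g.1.natural (hle.1 a)
        have hmap2 : P.chain.X.map (homOfLE (g.1.α.monotone (hle.1 a))) =
            eqToHom (congrArg P.chain.X.obj hj) := map_homOfLE_eq_eqToHom _ _ hj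
        have hcomp : P.chain.X.map (homOfLE (hle.1 a)) ≫ g.1.θ a = 𝟙 _ := by
          rw [hmap2] at hnat
          exact hnat.trans hθj
        have hm := (isIdMor_of_fact_id (P.negMap (hle.1 a)) (g.2 a) hcomp).1
        exact absurd (hRefl (hle.1 a) hm) (ne_of_lt hlt)
  have hα' : ∀ a, g.1.α a = a := fun a => hα a.val a rfl
  apply Subtype.ext
  apply chainHom_eq_id _ hα'
  intro a
  have E := hle.2 a (hle.1 a)
  rw [map_homOfLE_eq_eqToHom P.chain.X (hle.1 a) (hα' a)] at E
  have h3 : g.1.θ a ≫ eqToHom (congrArg P.chain.X.obj (hα' a)) = 𝟙 _ := E.symm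
  have := (comp_eqToHom_iff (congrArg P.chain.X.obj (hα' a)) _ _).mp h3
  rw [this, Category.id_comp]

theorem consecutive {P : NegObj R} {i j : Fin (P.n + 1)} (hij : i < j)
    (hId : IsIdMor (P.X.map (homOfLE hij.le))) :
    ∃ (k : Fin (P.n + 1)) (hik : i < k), k.val = i.val + 1 ∧
      IsIdMor (P.X.map (homOfLE hik.le)) := by
  have hjlt : j.val < P.n + 1 := j.isLt
  have hijv : i.val < j.val := hij
  set k : Fin (P.n + 1) := ⟨i.val + 1, by omega⟩ with hkdef
  have hik : i < k := Fin.lt_def.mpr (Nat.lt_succ_self i.val)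
  have hkj : k ≤ j := Fin.le_def.mpr hijv
  refine ⟨k, hik, rfl, ?_⟩
  obtain ⟨e, he⟩ := hId
  apply isIdMor_of_neg_splitMono (P.negMap hik.le)
    (r := P.X.map (homOfLE hkj) ≫ eqToHom e.symm)
  have hsplit : P.X.map (homOfLE hik.le) ≫ P.X.map (homOfLE hkj) =
      P.X.map (homOfLE hij.le) := by
    rw [← Functor.map_comp, homOfLE_comp]
  rw [← Category.assoc, hsplit, he, eqToHom_trans, eqToHom_refl]

theorem exists_up {P : NegObj R} {i k : Fin (P.n + 1)} (hik : i < k)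
    (hk : k.val = i.val + 1) (hId : IsIdMor (P.X.map (homOfLE hik.le))) :
    ∃ g : P ⟶ P, NegHom.le (𝟙 P) g ∧ g.1.α i = k := by
  have hikv : i.val < k.val := hik
  have hmono : Monotone (fun a : Fin (P.n + 1) => if a = i then k else a) := by
    intro a b hab
    have hav : a.val ≤ b.val := hab
    dsimp only
    by_cases ha : a = i <;> by_cases hb : b = i
    · rw [if_pos ha, if_pos hb]
    · rw [if_pos ha, if_neg hb]
      have h1 : b.val ≠ i.val := fun h => hb (Fin.ext h)
      have h2 : a.val = i.val := congrArg Fin.val ha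
      exact Fin.le_def.mpr (by omega)
    · rw [if_neg ha, if_pos hb]
      have h2 : b.val = i.val := congrArg Fin.val hb
      exact Fin.le_def.mpr (by omega)
    · rw [if_neg ha, if_neg hb]; exact hab
  have hsle : ∀ a : Fin (P.n + 1), a ≤ (⟨_, hmono⟩ : _ →o _) a := by
    intro a
    show a ≤ if a = i then k else a
    by_cases ha : a = i
    · rw [if_pos ha]; subst ha; exact hik.le
    · rw [if_neg ha]
  have hIdθ : ∀ a, IsIdMor (P.X.map (homOfLE (hsle a))) := by
    intro a
    by_cases ha : a = i
    · subst ha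
      exact isIdMor_map_congr P.X hik.le (hsle a) (if_pos rfl).symm hId
    · have e : a = (⟨_, hmono⟩ : _ →o _) a := (if_neg ha).symm
      rw [map_homOfLE_eq_eqToHom P.X _ e]
      exact ⟨_, rfl⟩
  refine ⟨⟨⟨⟨_, hmono⟩, fun a => P.X.map (homOfLE (hsle a)), ?_⟩,
    fun a => pos_of_isIdMor (hIdθ a)⟩, ⟨hsle, fun a h => (Category.id_comp _).symm⟩, if_pos rfl⟩
  intro a b h
  show P.X.map (homOfLE h) ≫ P.X.map (homOfLE (hsle b)) =
    P.X.map (homOfLE (hsle a)) ≫ P.X.map (homOfLE (hmono h))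
  exact (P.X.map_comp _ _).symm.trans
    ((congrArg P.X.map (Subsingleton.elim _ _)).trans (P.X.map_comp _ _))

theorem exists_down {P : NegObj R} {i k : Fin (P.n + 1)} (hik : i < k)
    (hk : k.val = i.val + 1) (hId : IsIdMor (P.X.map (homOfLE hik.le))) :
    ∃ g : P ⟶ P, NegHom.le g (𝟙 P) ∧ g.1.α k = i := by
  have hikv : i.val < k.val := hik
  obtain ⟨eX, heX⟩ := hId
  have hmono : Monotone (fun a : Fin (P.n + 1) => if a = k then i else a) := by
    intro a b hab
    have hav : a.val ≤ b.val := hab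
    dsimp only
    by_cases ha : a = k <;> by_cases hb : b = k
    · rw [if_pos ha, if_pos hb]
    · rw [if_pos ha, if_neg hb]
      have h2 : a.val = k.val := congrArg Fin.val ha
      exact Fin.le_def.mpr (by omega)
    · rw [if_neg ha, if_pos hb]
      have h1 : a.val ≠ k.val := fun h => ha (Fin.ext h)
      have h2 : b.val = k.val := congrArg Fin.val hb
      exact Fin.le_def.mpr (by omega)
    · rw [if_neg ha, if_neg hb]; exact hab
  set αf : Fin (P.n + 1) →o Fin (P.n + 1) := ⟨_, hmono⟩ with hαf
  have hea : ∀ a, P.X.obj a = P.X.obj (αf a) := by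
    intro a
    by_cases ha : a = k
    · subst ha
      rw [show αf a = i from if_pos rfl]
      exact eX.symm
    · rw [show αf a = a from if_neg ha]
  have hV : ∀ (c b : Fin (P.n + 1)) (h1 : c ≤ b) (h2 : c ≤ αf b),
      P.X.map (homOfLE h1) ≫ eqToHom (hea b) = P.X.map (homOfLE h2) := by
    intro c b h1 h2
    by_cases hb : b = k
    · subst hb
      have e1 : αf b = i := if_pos rfl
      have hci : c ≤ i := by rw [← e1]; exact h2
      have hsplit : P.X.map (homOfLE h1) =
          P.X.map (homOfLE hci) ≫ P.X.map (homOfLE hik.le) := by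
        rw [← Functor.map_comp, homOfLE_comp]
      rw [hsplit, heX, Category.assoc, eqToHom_trans,
        map_homOfLE_congr P.X h2 rfl e1 hci]
      simp
    · have e2 : αf b = b := if_neg hb
      rw [map_homOfLE_congr P.X h2 rfl e2 (e2 ▸ h2)]
      simp
  have hnat : ∀ {a b : Fin (P.n + 1)} (h : a ≤ b),
      P.X.map (homOfLE h) ≫ eqToHom (hea b) =
        eqToHom (hea a) ≫ P.X.map (homOfLE (αf.monotone h)) := by
    intro a b h
    by_cases ha : a = k
    · subst ha
      by_cases hb : b = a
      · subst hb
        rw [map_homOfLE_eq_eqToHom P.X h rfl,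
          map_homOfLE_eq_eqToHom P.X (αf.monotone h) rfl]
        simp
      · have e1 : αf a = i := if_pos rfl
        have e2 : αf b = b := if_neg (fun hh => hb hh)
        have hkb : a ≤ αf b := by rw [e2]; exact h
        have hib : i ≤ αf b := hik.le.trans hkb
        rw [hV a b h hkb, map_homOfLE_congr P.X (αf.monotone h) e1 rfl hib]
        have hsplit : P.X.map (homOfLE hib) =
            P.X.map (homOfLE hik.le) ≫ P.X.map (homOfLE hkb) := by
          rw [← Functor.map_comp, homOfLE_comp]
        rw [hsplit, heX]
        simp [eqToHom_trans]
    · have e : αf a = a := if_neg ha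
      have h2 : a ≤ αf b := by
        by_cases hb : b = k
        · rw [show αf b = i from by rw [hb]; exact if_pos rfl]
          have h1 : a.val ≠ k.val := fun hh => ha (Fin.ext hh)
          have h3 : a.val ≤ k.val := hb ▸ h
          exact Fin.le_def.mpr (by omega)
        · rw [show αf b = b from if_neg hb]; exact h
      rw [hV a b h h2, map_homOfLE_congr P.X (αf.monotone h) e rfl h2]
      simp
  have hpos : ∀ a, R.pos (eqToHom (hea a)) := by
    intro a
    have := R.pos_id (P.X.obj a)
    rw [show eqToHom (hea a) = eqToHom (hea a) from rfl]
    exact pos_of_isIdMor ⟨hea a, rfl⟩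
  have hd : ∀ a : Fin (P.n + 1), αf a ≤ a := by
    intro a
    show (if a = k then i else a) ≤ a
    by_cases ha : a = k
    · rw [if_pos ha]; subst ha; exact hik.le
    · rw [if_neg ha]
  refine ⟨⟨⟨αf, fun a => eqToHom (hea a), hnat⟩, hpos⟩, ⟨hd, fun a h => ?_⟩, if_pos rfl⟩
  · -- goal : (𝟙 P).1.θ a = eqToHom (hea a) ≫ P.X.map (homOfLE h)
    show 𝟙 (P.X.obj a) = eqToHom (hea a) ≫ P.X.map (homOfLE h)
    by_cases ha : a = k
    · subst ha
      have e1 : αf a = i := if_pos rfl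
      rw [map_homOfLE_congr P.X h e1 rfl hik.le]
      erw [heX]
      erw [Category.comp_id]
      exact ((congrArg (fun t => eqToHom (hea a) ≫ t) (eqToHom_trans (congrArg P.X.obj e1) eX)).trans
        ((eqToHom_trans (hea a) ((congrArg P.X.obj e1).trans eX)).trans
          (eqToHom_refl (P.X.obj a) _))).symm
    · have e : αf a = a := if_neg ha
      rw [map_homOfLE_eq_eqToHom P.X h e]
      simp [eqToHom_trans]
      rfl

end Aux

section Statements

variable (R : ReedyStruct C)

theorem statement12 (P : NegObj R) :
    List.TFAE [
      P.IdRefl,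
      ∀ g : P ⟶ P, NegHom.le (𝟙 P) g → g = 𝟙 P,
      ∀ g : P ⟶ P, NegHom.le g (𝟙 P) → g = 𝟙 P,
      ∀ g : P ⟶ P, NegHom.equiv (𝟙 P) g → NegHom.le g (𝟙 P),
      ∀ g : P ⟶ P, NegHom.equiv (𝟙 P) g → g = 𝟙 P] := by
  have h12 : P.IdRefl → ∀ g : P ⟶ P, NegHom.le (𝟙 P) g → g = 𝟙 P :=
    fun h g hle => one_to_two h g hle
  have h13 : P.IdRefl → ∀ g : P ⟶ P, NegHom.le g (𝟙 P) → g = 𝟙 P :=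
    fun h g hle => one_to_three h g hle
  tfae_have 1 → 2 := h12
  tfae_have 1 → 3 := h13
  tfae_have 1 → 5 := by
    intro h1
    have key : ∀ f g : P ⟶ P, Relation.EqvGen (fun a b : P ⟶ P => NegHom.le a b) f g →
        (f = 𝟙 P → g = 𝟙 P) ∧ (g = 𝟙 P → f = 𝟙 P) := by
      intro f g h
      induction h with
      | rel a b hab =>
        exact ⟨fun ha => h12 h1 b (ha ▸ hab), fun hb => h13 h1 a (hb ▸ hab)⟩
      | refl a => exact ⟨id, id⟩
      | symm a b _ ih => exact ⟨ih.2, ih.1⟩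
      | trans a b c _ _ ih1 ih2 => exact ⟨fun h => ih2.1 (ih1.1 h), fun h => ih1.2 (ih2.2 h)⟩
    intro g hg
    exact (key _ _ hg).1 rfl
  tfae_have 5 → 4 := by
    intro h5 g hg
    rw [h5 g hg]
    exact negHom_le_refl (𝟙 P)
  tfae_have 2 → 1 := by
    intro h2
    intro i j h hId
    rcases eq_or_lt_of_le h with he | hlt
    · exact he
    · obtain ⟨k, hik, hk, hIdk⟩ := consecutive hlt hId
      obtain ⟨g, hle, hgi⟩ := exists_up hik hk hIdk
      rw [h2 g hle] at hgi
      exact absurd hgi (ne_of_lt hik)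
  tfae_have 3 → 1 := by
    intro h3
    intro i j h hId
    rcases eq_or_lt_of_le h with he | hlt
    · exact he
    · obtain ⟨k, hik, hk, hIdk⟩ := consecutive hlt hId
      obtain ⟨g, hle, hgk⟩ := exists_down hik hk hIdk
      rw [h3 g hle] at hgk
      exact absurd hgk.symm (ne_of_lt hik)
  tfae_have 4 → 1 := by
    intro h4
    intro i j h hId
    rcases eq_or_lt_of_le h with he | hlt
    · exact he
    · obtain ⟨k, hik, hk, hIdk⟩ := consecutive hlt hId
      obtain ⟨g, hle, hgi⟩ := exists_up hik hk hIdk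
      have hle' := h4 g (Relation.EqvGen.rel _ _ hle)
      have := hle'.1 i
      rw [hgi] at this
      exact absurd this (not_le.mpr hik)
  tfae_finish


end Statements

end ReedyPaper
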